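/- Let u ∈ ℝ⁴ be unit timelike and ρ, p real numbers with ρ + p ≠ 0, and let R = (ρ+p)(ηu)(ηu)ᵀ + ((ρ-p)/2)·η. Define R̂ = ηR, r = tr R̂, N̂ = R̂ - (r/4)·Id, let s be the unique real number with s³ = -(8/3)·tr(N̂³), and Γ = (1/4)·Id - (1/s)·N̂. Then s = ρ + p ≠ 0, r = ρ - 3p, Γ = -u(ηu)ᵀ, Γ² = Γ, xᵀ(ηΓ)x < 0 for every timelike vector x, and ρ = (3s+r)/4, p = (s-r)/4. -/

import Mathlib

open Matrix

/-- The Minkowski metric matrix η = diag(-1,1,1,1) in an orthonormal frame of ℝ⁴. -/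
noncomputable def η : Matrix (Fin 4) (Fin 4) ℝ := Matrix.diagonal ![-1, 1, 1, 1]

/-- Minkowski inner product ⟨x,y⟩ = xᵀ η y. -/
noncomputable def mink (x y : Fin 4 → ℝ) : ℝ := x ⬝ᵥ (η *ᵥ y)

lemma aux_mul_vecMulVec (M : Matrix (Fin 4) (Fin 4) ℝ) (a b : Fin 4 → ℝ) :
    M * vecMulVec a b = vecMulVec (M *ᵥ a) b := by
  ext i j; simp [mul_apply, vecMulVec_apply, mulVec, dotProduct, Finset.sum_mul, mul_assoc]

lemma aux_vecMulVec_mul (a b c d : Fin 4 → ℝ) :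
    vecMulVec a b * vecMulVec c d = (b ⬝ᵥ c) • vecMulVec a d := by
  ext i j; simp [mul_apply, vecMulVec_apply, dotProduct, Finset.mul_sum, Finset.sum_mul]
  ring_nf
  congr 1; ext k; ring

lemma aux_trace_vecMulVec (a b : Fin 4 → ℝ) : (vecMulVec a b).trace = a ⬝ᵥ b := by
  simp [trace, vecMulVec_apply, dotProduct, diag]

lemma aux_vecMulVec_mulVec (a b x : Fin 4 → ℝ) : vecMulVec a b *ᵥ x = (b ⬝ᵥ x) • a := by
  ext i; simp [vecMulVec_apply, mulVec, dotProduct, Finset.sum_mul]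
  exact Finset.sum_congr rfl fun k _ => by ring

lemma aux_eta_eta : η * η = 1 := by
  rw [η, diagonal_mul_diagonal]
  have : (fun i => ![-1, 1, 1, 1] i * ![(-1:ℝ), 1, 1, 1] i) = (1 : Fin 4 → ℝ) := by
    funext i; fin_cases i <;> norm_num
  rw [this]; exact diagonal_one

lemma aux_timelike (u x : Fin 4 → ℝ) (hu : mink u u = -1) (hx : mink x x < 0) :
    x ⬝ᵥ (η *ᵥ u) ≠ 0 := by
  simp only [mink, dotProduct, η, mulVec_diagonal, Fin.sum_univ_four, Matrix.cons_val_zero,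
    Matrix.cons_val_one, Matrix.head_cons, Matrix.cons_val_two, Matrix.tail_cons,
    Matrix.cons_val_three] at *
  intro h
  norm_num at hu hx h
  have hxb : x 1 * x 1 + x 2 * x 2 + x 3 * x 3 < x 0 * x 0 := by linarith
  have hx0pos : 0 < x 0 * x 0 := by
    nlinarith [mul_self_nonneg (x 1), mul_self_nonneg (x 2), mul_self_nonneg (x 3)]
  have hun : (0:ℝ) ≤ u 1 * u 1 + u 2 * u 2 + u 3 * u 3 := by
    nlinarith [mul_self_nonneg (u 1), mul_self_nonneg (u 2), mul_self_nonneg (u 3)]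
  have heq : x 0 * u 0 = x 1 * u 1 + x 2 * u 2 + x 3 * u 3 := by linarith
  have hcs : (x 1 * u 1 + x 2 * u 2 + x 3 * u 3) * (x 1 * u 1 + x 2 * u 2 + x 3 * u 3) ≤
      (x 1 * x 1 + x 2 * x 2 + x 3 * x 3) * (u 1 * u 1 + u 2 * u 2 + u 3 * u 3) := by
    nlinarith [sq_nonneg (x 1 * u 2 - x 2 * u 1), sq_nonneg (x 1 * u 3 - x 3 * u 1),
      sq_nonneg (x 2 * u 3 - x 3 * u 2)]
  have hsq : (x 0 * u 0) * (x 0 * u 0) ≤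
      (x 1 * x 1 + x 2 * x 2 + x 3 * x 3) * (u 1 * u 1 + u 2 * u 2 + u 3 * u 3) := by
    rw [heq]; exact hcs
  have hstep : (x 1 * x 1 + x 2 * x 2 + x 3 * x 3) * (u 1 * u 1 + u 2 * u 2 + u 3 * u 3) ≤
      (x 0 * x 0) * (u 1 * u 1 + u 2 * u 2 + u 3 * u 3) :=
    mul_le_mul_of_nonneg_right hxb.le hun
  nlinarith [hsq, hstep, hx0pos]

theorem stmt_2 (u : Fin 4 → ℝ) (hu : mink u u = -1)
    (ρ p : ℝ) (hρp : ρ + p ≠ 0)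
    (R : Matrix (Fin 4) (Fin 4) ℝ)
    (hR : R = (ρ + p) • vecMulVec (η *ᵥ u) (η *ᵥ u) + ((ρ - p) / 2) • η)
    (r : ℝ) (hr : r = (η * R).trace)
    (N : Matrix (Fin 4) (Fin 4) ℝ) (hN : N = η * R - (r / 4) • 1)
    (s : ℝ) (hs3 : s ^ 3 = -(8 / 3) * (N ^ 3).trace)
    (Γ : Matrix (Fin 4) (Fin 4) ℝ) (hΓ : Γ = (1 / 4 : ℝ) • 1 - (1 / s) • N) :
    s = ρ + p ∧ s ≠ 0 ∧ r = ρ - 3 * p ∧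
      Γ = -(vecMulVec u (η *ᵥ u)) ∧ Γ * Γ = Γ ∧
      (∀ x : Fin 4 → ℝ, mink x x < 0 → x ⬝ᵥ ((η * Γ) *ᵥ x) < 0) ∧
      ρ = (3 * s + r) / 4 ∧ p = (s - r) / 4 := by
  set P : Matrix (Fin 4) (Fin 4) ℝ := vecMulVec u (η *ᵥ u) with hP
  have hdot : (η *ᵥ u) ⬝ᵥ u = -1 := by rw [dotProduct_comm]; exact hu
  have hηP : η * vecMulVec (η *ᵥ u) (η *ᵥ u) = P := by
    rw [aux_mul_vecMulVec, mulVec_mulVec, aux_eta_eta, one_mulVec]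
  have hPP : P * P = -P := by
    rw [hP, aux_vecMulVec_mul, hdot, neg_smul, one_smul]
  have htrP : P.trace = -1 := by rw [hP, aux_trace_vecMulVec]; exact hu
  have hηR : η * R = (ρ + p) • P + ((ρ - p) / 2) • 1 := by
    rw [hR, Matrix.mul_add, Matrix.mul_smul, Matrix.mul_smul, hηP, aux_eta_eta]
  have hrval : r = ρ - 3 * p := by
    rw [hr, hηR, trace_add, trace_smul, trace_smul, htrP, trace_one]
    simp; ring
  have hNeq : N = (ρ + p) • P + ((ρ + p) / 4) • 1 := by
    rw [hN, hηR, hrval]; module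
  have h2 : N * N = (-((ρ + p) ^ 2 / 2)) • P + ((ρ + p) ^ 2 / 16) • (1 : Matrix (Fin 4) (Fin 4) ℝ) := by
    rw [hNeq, add_mul, mul_add, mul_add]
    simp only [smul_mul_assoc, mul_smul_comm, hPP, Matrix.mul_one, Matrix.one_mul, smul_neg,
      smul_smul]
    module
  have h3 : N ^ 3 = (7 * (ρ + p) ^ 3 / 16) • P + ((ρ + p) ^ 3 / 64) • (1 : Matrix (Fin 4) (Fin 4) ℝ) := by
    rw [pow_succ, pow_two, h2, hNeq, add_mul, mul_add, mul_add]
    simp only [smul_mul_assoc, mul_smul_comm, hPP, Matrix.mul_one, Matrix.one_mul, smul_neg,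
      smul_smul]
    module
  have htrN3 : (N ^ 3).trace = -(3 / 8) * (ρ + p) ^ 3 := by
    rw [h3, trace_add, trace_smul, trace_smul, htrP, trace_one]
    simp; ring
  have hs3' : s ^ 3 = (ρ + p) ^ 3 := by rw [hs3, htrN3]; ring
  have hse : s = ρ + p := by
    have hsm := Odd.strictMono_pow (R := ℝ) (n := 3) ⟨1, by norm_num⟩
    exact hsm.injective hs3'
  have hΓeq : Γ = -P := by
    rw [hΓ, hNeq, hse]
    match_scalars <;> field_simp <;> norm_num
  refine ⟨hse, hse ▸ hρp, hrval, hΓeq, ?_, ?_, by rw [hse, hrval]; ring, by rw [hse, hrval]; ring⟩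
  · rw [hΓeq, neg_mul_neg, hPP]
  · intro x hx
    have hne := aux_timelike u x hu hx
    have : η * Γ = -vecMulVec (η *ᵥ u) (η *ᵥ u) := by
      rw [hΓeq, Matrix.mul_neg, hP, aux_mul_vecMulVec]
    rw [this, neg_mulVec, aux_vecMulVec_mulVec, dotProduct_neg, dotProduct_smul]
    have : (η *ᵥ u) ⬝ᵥ x = x ⬝ᵥ (η *ᵥ u) := dotProduct_comm _ _
    rw [this]
    exact neg_lt_zero.mpr (mul_self_pos.mpr hne)
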